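/- Let S be a symmetric numerical semigroup with multiplicity m := min(S \ {0}) and delta invariant δ. Suppose ℓ' is an integer with ℓ' ≤ δ and ℓ' ≥ m. If #(S ∩ [ℓ'−m, ℓ'−1]) > m/2, then a contradiction follows; in other words, for any ℓ' ≤ δ with ℓ' ≥ m one has #(S ∩ [ℓ'−m, ℓ'−1]) ≤ m/2. -/
import Mathlib

open Finset

open scoped Classical in
/-- Weight function of a subset `S ⊆ ℕ`:
`w0 S ℓ = #([0,ℓ) ∩ S) − #([0,ℓ) \ S)`. -/
noncomputable def w0 (S : Set ℕ) (l : ℕ) : ℤ :=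
  (((Finset.range l).filter (fun k => k ∈ S)).card : ℤ) -
    (((Finset.range l).filter (fun k => k ∉ S)).card : ℤ)

open scoped Classical in
theorem window_count_le (S : Set ℕ) (h0 : 0 ∈ S)
    (hadd : ∀ a b, a ∈ S → b ∈ S → a + b ∈ S)
    (hfin : (Sᶜ : Set ℕ).Finite) (c : ℕ)
    (hc : ∀ n, c ≤ n → n ∈ S)
    (hcmin : ∀ c', (∀ n, c' ≤ n → n ∈ S) → c ≤ c')
    (hsym : ∀ ℓ < c, ℓ ∈ S ↔ (c - 1 - ℓ) ∉ S)
    (δ : ℕ) (hδ : δ = (Sᶜ : Set ℕ).ncard)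
    (m : ℕ) (hm : m ∈ S) (hmpos : 0 < m)
    (hmmin : ∀ k ∈ S, 0 < k → m ≤ k)
    (ℓ' : ℕ) (hℓ'm : m ≤ ℓ') (hℓ'δ : ℓ' ≤ δ) :
    2 * ((Finset.Icc (ℓ' - m) (ℓ' - 1)).filter (fun k => k ∈ S)).card ≤ m := by
  by_contra hcon
  push_neg at hcon
  set A := (Finset.Icc (ℓ' - m) (ℓ' - 1)).filter (fun k => k ∈ S) with hA
  set Q := (Finset.range c).filter (fun k => k ∉ S) with hQ
  -- δ equals the number of gaps, all of which are < c
  have hSc : (Sᶜ : Set ℕ) = ↑Q := by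
    ext x
    simp only [Set.mem_compl_iff, hQ, Finset.coe_filter, Finset.mem_range,
      Set.mem_setOf_eq, Finset.mem_coe]
    constructor
    · intro hx
      refine ⟨?_, hx⟩
      by_contra h
      exact hx (hc x (le_of_not_gt h))
    · tauto
  have hδQ : δ = Q.card := by rw [hδ, hSc, Set.ncard_coe_finset]
  have hcpos : 0 < c := by
    rcases Nat.eq_zero_or_pos c with h | h
    · subst h
      simp [hQ] at hδQ
      omega
    · exact h
  -- c = 2δ
  have hcard : ((Finset.range c).filter (fun k => k ∈ S)).card = Q.card := by
    apply Finset.card_bij (fun k _ => c - 1 - k)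
    · intro a ha
      rw [Finset.mem_filter, Finset.mem_range] at ha ⊢
      exact ⟨by omega, (hsym a ha.1).mp ha.2⟩
    · intro a ha b hb h
      rw [Finset.mem_filter, Finset.mem_range] at ha hb
      omega
    · intro q hq
      rw [Finset.mem_filter, Finset.mem_range] at hq
      refine ⟨c - 1 - q, ?_, by omega⟩
      rw [Finset.mem_filter, Finset.mem_range]
      refine ⟨by omega, ?_⟩
      apply (hsym (c - 1 - q) (by omega)).mpr
      have : c - 1 - (c - 1 - q) = q := by omega
      rw [this]
      exact hq.2
  have htot := Finset.card_filter_add_card_filter_not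
    (s := Finset.range c) (p := fun k => k ∈ S)
  rw [Finset.card_range] at htot
  have hQeq : #(Finset.filter (fun a => a ∉ S) (Finset.range c)) = Q.card := rfl
  have hc2δ : c = 2 * δ := by omega
  -- adding multiples of m stays in S
  have hstep : ∀ s t : ℕ, s ∈ S → s + m * t ∈ S := by
    intro s t hs
    induction t with
    | zero => simpa using hs
    | succ t ih =>
      have h1 : s + m * (t + 1) = (s + m * t) + m := by ring
      rw [h1]
      exact hadd _ _ ih hm
  have hkey : ∀ a b : ℕ, a % m = b % m → a ≤ b → b - a < m → a = b := by
    intro a b h hab hlt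
    have hdvd : m ∣ b - a := (Nat.modEq_iff_dvd' hab).mp h
    rcases Nat.eq_zero_or_pos (b - a) with h0' | h0'
    · omega
    · have := Nat.le_of_dvd h0' hdvd
      omega
  have hmemA : ∀ a ∈ A, a ∈ S ∧ ℓ' - m ≤ a ∧ a ≤ ℓ' - 1 := by
    intro a ha
    rw [hA, Finset.mem_filter, Finset.mem_Icc] at ha
    exact ⟨ha.2, ha.1.1, ha.1.2⟩
  haveI : NeZero m := ⟨hmpos.ne'⟩
  -- every n ≥ 2ℓ'-2 is in S
  have hall : ∀ n, 2 * ℓ' - 2 ≤ n → n ∈ S := by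
    intro n hn
    have hinj : ∀ a ∈ A, ∀ b ∈ A, ((a : ℕ) : ZMod m) = ((b : ℕ) : ZMod m) → a = b := by
      intro a ha b hb h
      rw [ZMod.natCast_eq_natCast_iff'] at h
      obtain ⟨_, ha1, ha2⟩ := hmemA a ha
      obtain ⟨_, hb1, hb2⟩ := hmemA b hb
      rcases le_total a b with hab | hab
      · exact hkey a b h hab (by omega)
      · exact (hkey b a h.symm hab (by omega)).symm
    have hBcard : (A.image (fun a : ℕ => (a : ZMod m))).card = A.card :=
      Finset.card_image_of_injOn (fun a ha b hb h => hinj a ha b hb h)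
    have hCcard : (A.image (fun a : ℕ => (n : ZMod m) - (a : ZMod m))).card = A.card := by
      apply Finset.card_image_of_injOn
      intro a ha b hb h
      have h' : (n : ZMod m) - (a : ZMod m) = (n : ZMod m) - (b : ZMod m) := h
      apply hinj a ha b hb
      have h2 := congrArg (fun z => (n : ZMod m) - z) h'
      simpa [sub_sub_cancel] using h2
    have hBC : ((A.image (fun a : ℕ => (a : ZMod m))) ∩
        (A.image (fun a : ℕ => (n : ZMod m) - (a : ZMod m)))).Nonempty := by
      by_contra h
      rw [Finset.not_nonempty_iff_eq_empty, ← Finset.disjoint_iff_inter_eq_empty] at h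
      have hu := Finset.card_union_of_disjoint h
      have hle := Finset.card_le_univ ((A.image (fun a : ℕ => (a : ZMod m))) ∪
        (A.image (fun a : ℕ => (n : ZMod m) - (a : ZMod m))))
      rw [ZMod.card] at hle
      omega
    obtain ⟨x, hx⟩ := hBC
    rw [Finset.mem_inter, Finset.mem_image, Finset.mem_image] at hx
    obtain ⟨⟨a, ha, hax⟩, ⟨b, hb, hbx⟩⟩ := hx
    obtain ⟨haS, ha1, ha2⟩ := hmemA a ha
    obtain ⟨hbS, hb1, hb2⟩ := hmemA b hb
    have habn : ((a + b : ℕ) : ZMod m) = (n : ZMod m) := by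
      push_cast
      rw [hax, ← hbx]
      ring
    have hmod : (a + b) % m = n % m := by
      rwa [ZMod.natCast_eq_natCast_iff'] at habn
    have hle : a + b ≤ n := by omega
    have hdvd : m ∣ n - (a + b) := (Nat.modEq_iff_dvd' hle).mp hmod
    obtain ⟨t, ht⟩ := hdvd
    have hn' : n = (a + b) + m * t := by omega
    rw [hn']
    exact hstep _ _ (hadd a b haS hbS)
  have := hcmin _ hall
  omega
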